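/- If Q is a prime ideal of S and a is a Q-primary ideal containing p, then the n-th symbolic power a^{(n)} (the contraction of a^n S_Q to S) is contained in a^{⟨n⟩_p} = { f ∈ S : δ^i(f) ∈ a for all 0 ≤ i ≤ n−1 }. -/

import Mathlib

/-- if a is Q-primary with p ∈ a, then the symbolic power a^{(n)}
(contraction of a^n S_Q) is contained in a^{⟨n⟩_p}. -/
theorem stmt_10 (p : ℕ) (hp : p.Prime) (S : Type*) [CommRing S]
    (hpnzd : ∀ x : S, (p : S) * x = 0 → x = 0)
    (δ : S → S) (hδ : ∃ φ : S →+* S, ∀ x : S, φ x = x ^ p + p * δ x)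
    (Q a : Ideal S) [hQ : Q.IsPrime] (hprim : a.IsPrimary) (hrad : a.radical = Q)
    (hpa : (p : S) ∈ a) (n : ℕ) (hn : 1 ≤ n) :
    ∀ f ∈ Ideal.comap (algebraMap S (Localization Q.primeCompl))
        (Ideal.map (algebraMap S (Localization Q.primeCompl)) (a ^ n)),
      ∀ i < n, δ^[i] f ∈ a := by
  obtain ⟨φ, hφ⟩ := hδ
  have hpinj : ∀ u v : S, (p : S) * u = (p : S) * v → u = v := by
    intro u v h
    have h0 : (p : S) * (u - v) = 0 := by ring_nf; linear_combination h
    exact sub_eq_zero.mp (hpnzd (u - v) h0)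
  -- product rule for the p-derivation
  have hmul : ∀ x y : S, δ (x * y) = x ^ p * δ y + y ^ p * δ x + (p : S) * δ x * δ y := by
    intro x y
    apply hpinj
    have h1 : φ (x * y) = φ x * φ y := map_mul φ x y
    rw [hφ (x * y), hφ x, hφ y] at h1
    linear_combination h1
  -- additivity up to a correction in (x*y)
  have hadd : ∀ x y : S, ∃ d ∈ Ideal.span {x * y}, δ (x + y) = δ x + δ y - d := by
    intro x y
    refine ⟨∑ k ∈ Finset.Ioo 0 p, x ^ k * y ^ (p - k) * ((p.choose k / p : ℕ) : S), ?_, ?_⟩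
    · refine Ideal.sum_mem _ fun k hk => ?_
      rw [Finset.mem_Ioo] at hk
      rw [Ideal.mem_span_singleton]
      exact Dvd.dvd.mul_right
        (mul_dvd_mul (dvd_pow_self x hk.1.ne') (dvd_pow_self y (by omega))) _
    · apply hpinj
      have h1 : φ (x + y) = φ x + φ y := map_add φ x y
      rw [hφ (x + y), hφ x, hφ y] at h1
      have h2 := add_pow_prime_eq hp x y
      have h3 : x * y * ∑ k ∈ Finset.Ioo 0 p, x ^ (k - 1) * y ^ (p - k - 1) * ((p.choose k / p : ℕ) : S)
          = ∑ k ∈ Finset.Ioo 0 p, x ^ k * y ^ (p - k) * ((p.choose k / p : ℕ) : S) := by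
        rw [Finset.mul_sum]
        refine Finset.sum_congr rfl fun k hk => ?_
        rw [Finset.mem_Ioo] at hk
        obtain ⟨e, rfl⟩ : ∃ e, k = e + 1 := ⟨k - 1, by omega⟩
        obtain ⟨b, hb⟩ : ∃ b, p - (e + 1) = b + 1 := ⟨p - (e + 1) - 1, by omega⟩
        rw [hb]
        simp only [Nat.add_sub_cancel]
        ring
      linear_combination h1 - h2 - (p : S) * h3
  -- Lemma A : δ maps a^(m+1) into a^m
  have lemA : ∀ m : ℕ, ∀ x ∈ a ^ (m + 1), δ x ∈ a ^ m := by
    intro m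
    induction m with
    | zero => intro x _; simp
    | succ m ih =>
      intro x hx
      rw [pow_succ'] at hx
      have main : ∀ z, z ∈ a * a ^ (m + 1) →
          z ∈ a ^ (m + 1) ∧ δ z ∈ a ^ (m + 1) := by
        intro z hz
        refine Submodule.mul_induction_on hz ?_ ?_
        · intro r hr t ht
          refine ⟨Ideal.mul_mem_left _ r ht, ?_⟩
          rw [hmul r t]
          have hδt : δ t ∈ a ^ m := ih t ht
          have h1 : r ^ p * δ t ∈ a ^ (m + 1) := by
            rw [pow_succ']
            exact Ideal.mul_mem_mul (Ideal.pow_mem_of_mem a hr p hp.pos) hδt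
          have h2 : t ^ p * δ r ∈ a ^ (m + 1) :=
            Ideal.mul_mem_right _ _ (Ideal.pow_mem_of_mem _ ht p hp.pos)
          have h3 : (p : S) * δ r * δ t ∈ a ^ (m + 1) := by
            rw [mul_assoc, pow_succ']
            exact Ideal.mul_mem_mul hpa (Ideal.mul_mem_left _ _ hδt)
          exact add_mem (add_mem h1 h2) h3
        · intro u v hu hv
          refine ⟨add_mem hu.1 hv.1, ?_⟩
          obtain ⟨d, hdm, hde⟩ := hadd u v
          rw [hde]
          refine sub_mem (add_mem hu.2 hv.2) ?_
          have : Ideal.span {u * v} ≤ a ^ (m + 1) := by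
            rw [Ideal.span_le, Set.singleton_subset_iff]
            exact Ideal.mul_mem_right _ _ hu.1
          exact this hdm
      exact (main x hx).2
  have hpQ : (p : S) ∈ Q := hrad ▸ Ideal.le_radical hpa
  have hprimary := (Ideal.isPrimary_iff).mp hprim
  intro f hf i hi
  -- extract a multiplier s ∉ Q with s * f ∈ a ^ n
  rw [Ideal.mem_comap, IsLocalization.mem_map_algebraMap_iff Q.primeCompl] at hf
  obtain ⟨⟨⟨g, hg⟩, s⟩, heq⟩ := hf
  rw [← map_mul] at heq
  obtain ⟨c, hc⟩ := (IsLocalization.eq_iff_exists Q.primeCompl _).mp heq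
  have hm0Q : (c : S) * (s : S) ∉ Q := mul_mem c.2 s.2
  have hm0 : ((c : S) * (s : S)) * f ∈ a ^ n := by
    have : ((c : S) * (s : S)) * f = (c : S) * g := by
      rw [← hc]; ring
    rw [this]
    exact Ideal.mul_mem_left _ _ hg
  -- main induction: for every i there is a multiplier m ∉ Q with m * δ^[i] f ∈ a^(n-i)
  have key : ∀ j : ℕ, ∃ m : S, m ∉ Q ∧ m * δ^[j] f ∈ a ^ (n - j) := by
    intro j
    induction j with
    | zero => exact ⟨(c : S) * (s : S), hm0Q, by simpa using hm0⟩
    | succ j ihj =>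
      obtain ⟨m, hmQ, hw⟩ := ihj
      refine ⟨m ^ p * (m ^ p + (p : S) * δ m), ?_, ?_⟩
      · intro hmem
        rcases hQ.mul_mem_iff_mem_or_mem.mp hmem with h | h
        · exact hmQ (hQ.mem_of_pow_mem p h)
        · have : m ^ p ∈ Q := by
            have hpd : (p : S) * δ m ∈ Q := Ideal.mul_mem_right _ _ hpQ
            have := sub_mem h hpd
            simpa using this
          exact hmQ (hQ.mem_of_pow_mem p this)
      · set h := δ^[j] f with hh
        have hid : m ^ p * (m ^ p + (p : S) * δ m) * δ^[j + 1] f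
            = m ^ p * δ (m * h) - (m * h) ^ p * δ m := by
          rw [Function.iterate_succ_apply', ← hh]
          linear_combination (-(m ^ p) : S) * hmul m h
        rw [hid]
        rcases Nat.eq_zero_or_pos (n - j) with h0 | hpos
        · have : n - (j + 1) = 0 := by omega
          rw [this]; simp
        · obtain ⟨k, hk⟩ : ∃ k, n - j = k + 1 := ⟨n - j - 1, by omega⟩
          have hnk : n - (j + 1) = k := by omega
          rw [hnk]
          have hw' : m * h ∈ a ^ (k + 1) := by rwa [hk] at hw
          have t1 : m ^ p * δ (m * h) ∈ a ^ k :=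
            Ideal.mul_mem_left _ _ (lemA k _ hw')
          have t2 : (m * h) ^ p * δ m ∈ a ^ k := by
            have hmem : m * h ∈ a ^ k :=
              Ideal.pow_le_pow_right (Nat.le_succ k) hw'
            exact Ideal.mul_mem_right _ _ (Ideal.pow_mem_of_mem _ hmem p hp.pos)
          exact sub_mem t1 t2
  obtain ⟨m, hmQ, hw⟩ := key i
  have hma : m * δ^[i] f ∈ a := Ideal.pow_le_self (by omega) hw
  rcases hprimary.2 (mul_comm m (δ^[i] f) ▸ hma) with h | h
  · exact h
  · exact absurd (hrad ▸ h) hmQ
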